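/- Let Q, N > 0. The function S_ℓ(P) = (√Q − √P)²·N/((√Q − √P)² + N) on [0, Q] is convex if and only if Q ≤ 4N; equivalently, when Q > 4N, S_ℓ fails to be convex on [0, Q]. -/

import Mathlib

open Real

noncomputable def SlD (Q N x : ℝ) : ℝ := x - 2 * Real.sqrt Q * Real.sqrt x + (Q + N)

noncomputable def SlG (Q N x : ℝ) : ℝ := N - N ^ 2 / SlD Q N x

noncomputable def SlG1 (Q N x : ℝ) : ℝ :=
  N ^ 2 * (1 - Real.sqrt Q / Real.sqrt x) / (SlD Q N x) ^ 2

noncomputable def SlG2 (Q N x : ℝ) : ℝ :=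
  N ^ 2 * ((Real.sqrt Q / (2 * x * Real.sqrt x)) * SlD Q N x
    - 2 * (1 - Real.sqrt Q / Real.sqrt x) ^ 2) / (SlD Q N x) ^ 3

lemma SlD_eq {Q N x : ℝ} (hQ : 0 ≤ Q) (hx : 0 ≤ x) :
    SlD Q N x = (Real.sqrt Q - Real.sqrt x) ^ 2 + N := by
  have h1 : Real.sqrt x ^ 2 = x := Real.sq_sqrt hx
  have h2 : Real.sqrt Q ^ 2 = Q := Real.sq_sqrt hQ
  unfold SlD; rw [sub_sq, h1, h2]; ring

lemma SlD_pos {Q N x : ℝ} (hQ : 0 ≤ Q) (hN : 0 < N) (hx : 0 ≤ x) : 0 < SlD Q N x := by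
  rw [SlD_eq hQ hx]
  exact add_pos_of_nonneg_of_pos (sq_nonneg _) hN

lemma fOrig_eq {Q N y : ℝ} (hQ : 0 ≤ Q) (hN : 0 < N) (hy : 0 ≤ y) :
    (Real.sqrt Q - Real.sqrt y) ^ 2 * N / ((Real.sqrt Q - Real.sqrt y) ^ 2 + N)
      = SlG Q N y := by
  have hD : SlD Q N y = (Real.sqrt Q - Real.sqrt y) ^ 2 + N := SlD_eq hQ hy
  have hpos : 0 < (Real.sqrt Q - Real.sqrt y) ^ 2 + N :=
    add_pos_of_nonneg_of_pos (sq_nonneg _) hN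
  unfold SlG
  rw [hD]
  field_simp
  ring

lemma hasDerivAt_SlD {Q N x : ℝ} (hx : 0 < x) :
    HasDerivAt (SlD Q N) (1 - Real.sqrt Q / Real.sqrt x) x := by
  have hs : HasDerivAt Real.sqrt (1 / (2 * Real.sqrt x)) x := Real.hasDerivAt_sqrt hx.ne'
  have hsx : Real.sqrt x ≠ 0 := (Real.sqrt_pos.2 hx).ne'
  have h : HasDerivAt (SlD Q N)
      (1 - 2 * Real.sqrt Q * (1 / (2 * Real.sqrt x))) x :=
    ((hasDerivAt_id x).sub (hs.const_mul (2 * Real.sqrt Q))).add_const (Q + N)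
  convert h using 1
  field_simp

lemma hasDerivAt_SlG {Q N x : ℝ} (hQ : 0 ≤ Q) (hN : 0 < N) (hx : 0 < x) :
    HasDerivAt (SlG Q N) (SlG1 Q N x) x := by
  have hd := hasDerivAt_SlD (Q := Q) (N := N) hx
  have hDne : SlD Q N x ≠ 0 := (SlD_pos hQ hN hx.le).ne'
  have h : HasDerivAt (SlG Q N)
      (0 - (0 * SlD Q N x - N ^ 2 * (1 - Real.sqrt Q / Real.sqrt x)) / (SlD Q N x) ^ 2) x :=
    (hasDerivAt_const x N).sub ((hasDerivAt_const x (N ^ 2)).div hd hDne)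
  convert h using 1
  unfold SlG1
  field_simp
  ring

lemma hasDerivAt_SlG1 {Q N x : ℝ} (hQ : 0 ≤ Q) (hN : 0 < N) (hx : 0 < x) :
    HasDerivAt (SlG1 Q N) (SlG2 Q N x) x := by
  have hd := hasDerivAt_SlD (Q := Q) (N := N) hx
  have hDne : SlD Q N x ≠ 0 := (SlD_pos hQ hN hx.le).ne'
  have hsx : Real.sqrt x ≠ 0 := (Real.sqrt_pos.2 hx).ne'
  have hs : HasDerivAt Real.sqrt (1 / (2 * Real.sqrt x)) x := Real.hasDerivAt_sqrt hx.ne'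
  have hx2 : Real.sqrt x ^ 2 = x := Real.sq_sqrt hx.le
  -- numerator
  have hnum : HasDerivAt (fun y => N ^ 2 * (1 - Real.sqrt Q / Real.sqrt y))
      (N ^ 2 * (-((0 * Real.sqrt x - Real.sqrt Q * (1 / (2 * Real.sqrt x)))
        / (Real.sqrt x) ^ 2))) x :=
    (((hasDerivAt_const x (Real.sqrt Q)).div hs hsx).const_sub 1).const_mul (N ^ 2)
  -- denominator
  have hden : HasDerivAt (fun y => (SlD Q N y) ^ 2)
      (2 * (SlD Q N x) ^ 1 * (1 - Real.sqrt Q / Real.sqrt x)) x := hd.pow 2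
  have hdenne : (SlD Q N x) ^ 2 ≠ 0 := pow_ne_zero 2 hDne
  have h := hnum.div hden hdenne
  have heq : SlG1 Q N = fun y => N ^ 2 * (1 - Real.sqrt Q / Real.sqrt y) / (SlD Q N y) ^ 2 := rfl
  rw [heq]
  refine h.congr_deriv ?_
  symm
  unfold SlG2
  rw [div_eq_div_iff (by positivity) (by positivity)]
  field_simp
  ring_nf
  rw [hx2]
  ring

lemma SlG2_eq {r s N : ℝ} (hr : 0 < r) (hs : 0 < s) (hN : 0 < N) :
    SlG2 (r ^ 2) N (s ^ 2)
      = N ^ 2 * (r * ((s - r) ^ 2 + N) - 4 * s * (s - r) ^ 2)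
        / (2 * s ^ 3 * ((s - r) ^ 2 + N) ^ 3) := by
  have h1 : Real.sqrt (s ^ 2) = s := Real.sqrt_sq hs.le
  have h2 : Real.sqrt (r ^ 2) = r := Real.sqrt_sq hr.le
  have hD : SlD (r ^ 2) N (s ^ 2) = (s - r) ^ 2 + N := by
    unfold SlD; rw [h1, h2]; ring
  have hDpos : (0:ℝ) < (s - r) ^ 2 + N := add_pos_of_nonneg_of_pos (sq_nonneg _) hN
  unfold SlG2
  rw [hD, h1, h2]
  rw [div_eq_div_iff (by positivity) (by positivity)]
  field_simp
  ring

lemma monotoneOn_deriv_nonneg {g : ℝ → ℝ} {a b x d : ℝ}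
    (hm : MonotoneOn g (Set.Ioo a b)) (hx : x ∈ Set.Ioo a b) (hd : HasDerivAt g d x) :
    0 ≤ d := by
  rw [hasDerivAt_iff_tendsto_slope] at hd
  have h1 : Filter.Tendsto (slope g x) (nhdsWithin x (Set.Ioi x)) (nhds d) :=
    hd.mono_left (nhdsWithin_mono x fun y hy => ne_of_gt hy)
  have hne : (nhdsWithin x (Set.Ioi x)).NeBot := nhdsGT_neBot x
  refine ge_of_tendsto h1 ?_
  filter_upwards [Ioo_mem_nhdsGT hx.2] with y hy
  have hyab : y ∈ Set.Ioo a b := ⟨hx.1.trans hy.1, hy.2⟩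
  rw [slope_def_field]
  have := hm hx hyab hy.1.le
  have hxy : 0 < y - x := sub_pos.2 hy.1
  exact div_nonneg (sub_nonneg.2 this) hxy.le

/-- `Sℓ` is convex on `[0, Q]` if and only if `Q ≤ 4N`. -/
theorem Sl_convex_iff (Q N : ℝ) (hQ : 0 < Q) (hN : 0 < N) :
    ConvexOn ℝ (Set.Icc 0 Q) (fun P : ℝ =>
        (Real.sqrt Q - Real.sqrt P) ^ 2 * N / ((Real.sqrt Q - Real.sqrt P) ^ 2 + N)) ↔
      Q ≤ 4 * N := by
  set f : ℝ → ℝ := fun P =>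
    (Real.sqrt Q - Real.sqrt P) ^ 2 * N / ((Real.sqrt Q - Real.sqrt P) ^ 2 + N) with hf
  have hrQ : Real.sqrt Q ^ 2 = Q := Real.sq_sqrt hQ.le
  have hrpos : 0 < Real.sqrt Q := Real.sqrt_pos.2 hQ
  have hev : ∀ x : ℝ, 0 < x → f =ᶠ[nhds x] SlG Q N := by
    intro x hx
    filter_upwards [Ioi_mem_nhds hx] with y hy
    exact fOrig_eq hQ.le hN (le_of_lt hy)
  have hderiv : ∀ x : ℝ, 0 < x → HasDerivAt f (SlG1 Q N x) x := by
    intro x hx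
    exact (hasDerivAt_SlG hQ.le hN hx).congr_of_eventuallyEq (hev x hx)
  constructor
  · intro hconv
    by_contra hlt
    push_neg at hlt
    have hconv' : ConvexOn ℝ (Set.Ioo 0 Q) f :=
      hconv.subset Set.Ioo_subset_Icc_self (convex_Ioo 0 Q)
    have hmono : MonotoneOn (deriv f) (Set.Ioo 0 Q) :=
      hconv'.monotoneOn_deriv fun x hx => (hderiv x hx.1).differentiableAt
    have hx0 : Q / 4 ∈ Set.Ioo (0:ℝ) Q := ⟨by linarith, by linarith⟩
    have hEv2 : deriv f =ᶠ[nhds (Q / 4)] SlG1 Q N := by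
      filter_upwards [Ioi_mem_nhds hx0.1] with y hy
      exact (hderiv y hy).deriv
    have hd2 : HasDerivAt (deriv f) (SlG2 Q N (Q / 4)) (Q / 4) :=
      (hasDerivAt_SlG1 hQ.le hN hx0.1).congr_of_eventuallyEq hEv2
    have h0 : 0 ≤ SlG2 Q N (Q / 4) := monotoneOn_deriv_nonneg hmono hx0 hd2
    have hkey : SlG2 Q N (Q / 4) < 0 := by
      have hs : (0:ℝ) < Real.sqrt Q / 2 := by positivity
      have hxeq : (Real.sqrt Q / 2) ^ 2 = Q / 4 := by rw [div_pow, hrQ]; norm_num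
      have heq := SlG2_eq (r := Real.sqrt Q) (s := Real.sqrt Q / 2) hrpos hs hN
      rw [hrQ, hxeq] at heq
      rw [heq]
      set r := Real.sqrt Q with hr
      have hnum : r * ((r / 2 - r) ^ 2 + N) - 4 * (r / 2) * (r / 2 - r) ^ 2
          = r * (N - r ^ 2 / 4) := by ring
      rw [hnum]
      have hDpos : (0:ℝ) < (r / 2 - r) ^ 2 + N := add_pos_of_nonneg_of_pos (sq_nonneg _) hN
      apply div_neg_of_neg_of_pos
      · have h1 : r * (N - r ^ 2 / 4) < 0 :=
          mul_neg_of_pos_of_neg hrpos (by rw [hrQ]; linarith)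
        exact mul_neg_of_pos_of_neg (by positivity) h1
      · exact mul_pos (mul_pos two_pos (pow_pos (by linarith) 3)) (pow_pos hDpos 3)
    linarith
  · intro h4
    apply convexOn_of_hasDerivWithinAt2_nonneg (f' := SlG1 Q N) (f'' := SlG2 Q N)
      (convex_Icc 0 Q)
    · refine Continuous.continuousOn ?_
      refine Continuous.div (by fun_prop) (by fun_prop) ?_
      intro y
      exact (add_pos_of_nonneg_of_pos (sq_nonneg _) hN).ne'
    · intro x hx
      rw [interior_Icc] at hx
      exact (hderiv x hx.1).hasDerivWithinAt
    · intro x hx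
      rw [interior_Icc] at hx
      exact (hasDerivAt_SlG1 hQ.le hN hx.1).hasDerivWithinAt
    · intro x hx
      rw [interior_Icc] at hx
      have hsx : 0 < Real.sqrt x := Real.sqrt_pos.2 hx.1
      have hs2 : Real.sqrt x ^ 2 = x := Real.sq_sqrt hx.1.le
      have hslt : Real.sqrt x < Real.sqrt Q := Real.sqrt_lt_sqrt hx.1.le hx.2
      have heq := SlG2_eq (r := Real.sqrt Q) (s := Real.sqrt x) hrpos hsx hN
      rw [hrQ, hs2] at heq
      rw [heq]
      set r := Real.sqrt Q with hr
      set s := Real.sqrt x with hsdef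
      apply div_nonneg
      · apply mul_nonneg (sq_nonneg _)
        have h1 : 0 ≤ r * (4 * N - r ^ 2) :=
          mul_nonneg hrpos.le (by rw [hrQ]; linarith)
        have h2 : 0 ≤ (2 * s - r) ^ 2 * (5 * r - 4 * s) :=
          mul_nonneg (sq_nonneg _) (by linarith)
        nlinarith [h1, h2]
      · have hDpos : (0:ℝ) < (s - r) ^ 2 + N := add_pos_of_nonneg_of_pos (sq_nonneg _) hN
        positivity
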